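/- Let Λ be a full-rank lattice in a finite-dimensional real vector space V, and let f : Λ → ℂ be a quasi-polynomial function. If there is a nonempty open cone Q ⊆ V (a nonempty open subset closed under multiplication by positive scalars) such that f(λ) = 0 for all λ ∈ Q ∩ Λ, then f is identically zero on Λ. -/

import Mathlib

noncomputable section

open Module

variable {V : Type*} [NormedAddCommGroup V] [NormedSpace ℝ V] [FiniteDimensional ℝ V]

/-- A full-rank lattice: a free `ℤ`-submodule of rank `dim V` that spans `V` over `ℝ`. -/
def IsLattice (Λ : Submodule ℤ V) : Prop :=
  Submodule.span ℝ (Λ : Set V) = ⊤ ∧ Nonempty (Basis (Fin (finrank ℝ V)) ℤ Λ)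

/-- Polynomial functions on a real vector space, with values in `ℂ`:
the subalgebra of functions generated by (complexified) real linear functionals. -/
def IsPolyFun {W : Type*} [AddCommGroup W] [Module ℝ W] (p : W → ℂ) : Prop :=
  p ∈ Algebra.adjoin ℂ {g : W → ℂ | ∃ l : W →ₗ[ℝ] ℝ, g = fun w => ((l w : ℝ) : ℂ)}

/-- A function is quasi-polynomial on the lattice `Ξ` if there is a finite-index
sublattice `Ξ₀` such that on every coset `ξ + Ξ₀` of a lattice point `ξ ∈ Ξ`, the function
agrees with a polynomial function. -/
def IsQuasiPoly {W : Type*} [AddCommGroup W] [Module ℝ W] (Ξ : Submodule ℤ W) (f : W → ℂ) :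
    Prop :=
  ∃ Ξ₀ : Submodule ℤ W, Ξ₀ ≤ Ξ ∧ (∃ N : ℕ, 0 < N ∧ ∀ v ∈ Ξ, (N : ℤ) • v ∈ Ξ₀) ∧
    ∀ ξ ∈ Ξ, ∃ p : W → ℂ, IsPolyFun p ∧ ∀ μ ∈ Ξ₀, f (ξ + μ) = p (ξ + μ)

lemma polyFun_line {W : Type*} [AddCommGroup W] [Module ℝ W] {p : W → ℂ} (hp : IsPolyFun p)
    (a b : W) : ∃ F : Polynomial ℂ, ∀ t : ℝ, p (a + t • b) = F.eval (t : ℂ) := by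
  unfold IsPolyFun at hp
  induction hp using Algebra.adjoin_induction with
  | mem g hg =>
    obtain ⟨l, rfl⟩ := hg
    refine ⟨Polynomial.C ((l a : ℝ) : ℂ) + Polynomial.C ((l b : ℝ) : ℂ) * Polynomial.X, ?_⟩
    intro t
    simp [map_add, map_smul]
    ring
  | algebraMap r =>
    exact ⟨Polynomial.C r, fun t => by simp [Algebra.algebraMap_eq_smul_one]⟩
  | add x y hx hy ihx ihy =>
    obtain ⟨F, hF⟩ := ihx
    obtain ⟨G, hG⟩ := ihy
    exact ⟨F + G, fun t => by simp [Pi.add_apply, hF t, hG t]⟩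
  | mul x y hx hy ihx ihy =>
    obtain ⟨F, hF⟩ := ihx
    obtain ⟨G, hG⟩ := ihy
    exact ⟨F * G, fun t => by simp [Pi.mul_apply, hF t, hG t]⟩

lemma exists_lattice_in_cone (Λ : Submodule ℤ V) (hspan : Submodule.span ℝ (Λ : Set V) = ⊤)
    (Q : Set V) (hQne : Q.Nonempty) (hQopen : IsOpen Q)
    (hQcone : ∀ x ∈ Q, ∀ t : ℝ, 0 < t → t • x ∈ Q) :
    ∃ lam ∈ Λ, lam ∈ Q := by
  obtain ⟨x, hx⟩ := hQne
  obtain ⟨ε, hε, hball⟩ := Metric.isOpen_iff.mp hQopen x hx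
  have hxspan : x ∈ Submodule.span ℝ (Λ : Set V) := hspan ▸ Submodule.mem_top
  obtain ⟨c, hsupp, hsum⟩ := Submodule.mem_span_set.mp hxspan
  set R : ℝ := ∑ v ∈ c.support, ‖v‖ with hR
  have hR0 : 0 ≤ R := Finset.sum_nonneg fun v _ => norm_nonneg v
  set t : ℝ := (R + 1) / ε with ht
  have ht0 : 0 < t := div_pos (by linarith) hε
  set y : V := ∑ v ∈ c.support, (⌊t * c v⌋ : ℤ) • v with hy
  have hyΛ : y ∈ Λ := Submodule.sum_mem _ fun v hv =>
    Submodule.smul_mem _ _ (hsupp hv)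
  have htx : t • x = ∑ v ∈ c.support, (t * c v) • v := by
    rw [← hsum, Finsupp.sum, Finset.smul_sum]
    exact Finset.sum_congr rfl fun v _ => (smul_smul t (c v) v)
  have hdiff : ‖y - t • x‖ ≤ R := by
    rw [htx, hy, ← Finset.sum_sub_distrib]
    refine le_trans (norm_sum_le _ _) ?_
    refine Finset.sum_le_sum fun v _ => ?_
    have : (⌊t * c v⌋ : ℤ) • v - (t * c v) • v = ((⌊t * c v⌋ : ℝ) - t * c v) • v := by
      rw [sub_smul, Int.cast_smul_eq_zsmul]
    rw [this, norm_smul]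
    have h1 : |(⌊t * c v⌋ : ℝ) - t * c v| ≤ 1 := by
      have := Int.floor_le (t * c v)
      have := Int.lt_floor_add_one (t * c v)
      rw [abs_le]; constructor <;> linarith
    calc |(⌊t * c v⌋ : ℝ) - t * c v| * ‖v‖ ≤ 1 * ‖v‖ :=
          mul_le_mul_of_nonneg_right h1 (norm_nonneg v)
      _ = ‖v‖ := one_mul _
  have hyQ : y ∈ Q := by
    have h1 : (1 / t) • y ∈ Metric.ball x ε := by
      rw [Metric.mem_ball]
      have : (1 / t) • y - x = (1 / t) • (y - t • x) := by
        rw [smul_sub, smul_smul]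
        field_simp
        rw [one_smul]
      rw [dist_eq_norm, this, norm_smul]
      have : ‖(1:ℝ) / t‖ = 1 / t := by
        rw [Real.norm_eq_abs, abs_of_pos (by positivity)]
      rw [this]
      calc (1 / t) * ‖y - t • x‖ ≤ (1 / t) * R := by
            apply mul_le_mul_of_nonneg_left hdiff (by positivity)
        _ < ε := by
            have htε : ε * t = R + 1 := by rw [ht]; field_simp
            rw [div_mul_eq_mul_div, div_lt_iff₀ ht0, one_mul, htε]
            linarith
    have h2 : (1 / t) • y ∈ Q := hball h1
    have := hQcone _ h2 t ht0
    rwa [smul_smul, mul_one_div, div_self (ne_of_gt ht0), one_smul] at this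
  exact ⟨y, hyΛ, hyQ⟩

/-- A quasi-polynomial function on a full-rank lattice vanishing on the lattice points of a
nonempty open cone vanishes identically. -/
theorem quasiPoly_eq_zero_of_vanishes_on_cone
    (Λ : Submodule ℤ V) (hΛ : IsLattice Λ)
    (f : V → ℂ) (hf : IsQuasiPoly Λ f)
    (Q : Set V) (hQne : Q.Nonempty) (hQopen : IsOpen Q)
    (hQcone : ∀ x ∈ Q, ∀ t : ℝ, 0 < t → t • x ∈ Q)
    (hvanish : ∀ lam ∈ (Λ : Set V) ∩ Q, f lam = 0) :
    ∀ lam ∈ Λ, f lam = 0 := by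
  obtain ⟨Ξ₀, hle, ⟨N, hN, hNmem⟩, hpoly⟩ := hf
  obtain ⟨lam₀, hlam₀Λ, hlam₀Q⟩ := exists_lattice_in_cone Λ hΛ.1 Q hQne hQopen hQcone
  -- λ := N • lam₀ ∈ Ξ₀ ∩ Q
  set μ₀ : V := (N : ℤ) • lam₀ with hμ₀
  have hμ₀Ξ : μ₀ ∈ Ξ₀ := hNmem _ hlam₀Λ
  have hμ₀Q : μ₀ ∈ Q := by
    have : ((N : ℝ)) • lam₀ ∈ Q := hQcone _ hlam₀Q _ (by exact_mod_cast hN)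
    rwa [hμ₀, ← Int.cast_smul_eq_zsmul ℝ]
    
  intro ξ hξ
  obtain ⟨p, hpPoly, hpeq⟩ := hpoly ξ hξ
  obtain ⟨F, hF⟩ := polyFun_line hpPoly ξ μ₀
  -- for large n, ξ + n • μ₀ ∈ Q
  have hev : ∀ᶠ n : ℕ in Filter.atTop, ξ + (n : ℝ) • μ₀ ∈ Q := by
    have htend : Filter.Tendsto (fun n : ℕ => μ₀ + (n : ℝ)⁻¹ • ξ) Filter.atTop (nhds μ₀) := by
      have : Filter.Tendsto (fun n : ℕ => (n : ℝ)⁻¹) Filter.atTop (nhds 0) :=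
        tendsto_inv_atTop_zero.comp tendsto_natCast_atTop_atTop
      have h2 := this.smul_const ξ
      rw [zero_smul] at h2
      simpa using (tendsto_const_nhds.add h2)
    have hevQ : ∀ᶠ n : ℕ in Filter.atTop, μ₀ + (n : ℝ)⁻¹ • ξ ∈ Q :=
      htend.eventually (hQopen.mem_nhds hμ₀Q)
    filter_upwards [hevQ, Filter.eventually_gt_atTop 0] with n hn hn0
    have hnpos : (0:ℝ) < n := by exact_mod_cast hn0
    have := hQcone _ hn _ hnpos
    rwa [smul_add, smul_smul, mul_inv_cancel₀ (ne_of_gt hnpos), one_smul, add_comm] at this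
  -- F has infinitely many roots
  obtain ⟨n₀, hn₀⟩ := Filter.eventually_atTop.mp hev
  have hroot : ∀ n : ℕ, n₀ ≤ n → F.eval ((n : ℝ) : ℂ) = 0 := by
    intro n hn
    have hμ : (n : ℝ) • μ₀ ∈ Ξ₀ := by
      have : (n : ℝ) • μ₀ = (n : ℤ) • μ₀ := by
        rw [← Int.cast_natCast (R := ℝ), Int.cast_smul_eq_zsmul ℝ]
      rw [this]
      exact Submodule.smul_mem _ _ hμ₀Ξ
    have hmem : ξ + (n : ℝ) • μ₀ ∈ Λ := Submodule.add_mem _ hξ (hle hμ)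
    have hzero : f (ξ + (n : ℝ) • μ₀) = 0 := hvanish _ ⟨hmem, hn₀ n hn⟩
    rw [← hF n, ← hpeq _ hμ, hzero]
  have hFzero : F = 0 := by
    apply Polynomial.eq_zero_of_infinite_isRoot
    apply Set.Infinite.mono (s := (fun k : ℕ => ((n₀ + k : ℕ) : ℂ)) '' Set.univ)
    · rintro _ ⟨k, -, rfl⟩
      have : ((n₀ + k : ℕ) : ℂ) = (((n₀ + k : ℕ) : ℝ) : ℂ) := by push_cast; ring
      simp only [Set.mem_setOf_eq, Polynomial.IsRoot, this]
      exact hroot _ (Nat.le_add_right _ _)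
    · have hinj : Function.Injective (fun k : ℕ => ((n₀ + k : ℕ) : ℂ)) := by
        intro a b hab
        have : ((n₀ + a : ℕ) : ℂ) = ((n₀ + b : ℕ) : ℂ) := hab
        have h2 : n₀ + a = n₀ + b := Nat.cast_injective this
        omega
      exact Set.infinite_of_injective_forall_mem hinj (fun k => ⟨k, trivial, rfl⟩)
  have : p ξ = 0 := by
    have := hF 0
    rw [hFzero] at this
    simpa using this
  have := hpeq 0 (Submodule.zero_mem _)
  rw [add_zero] at this
  rw [this, ‹p ξ = 0›]

end
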